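/- arXiv:2004.03341 — 9 statements merged into one kernel-verified Lean document; each statement's English description precedes it below -/
import Mathlib

section
/- Let R be an Artinian commutative ring and a ∈ R a zero-divisor that is not nilpotent. Then there exists an idempotent e ∈ R such that the canonical ring homomorphism R → R/(e) × R/(1−e) is an isomorphism, the image of a in R/(e) is nilpotent, and the image of a in R/(1−e) is a unit. -/
/-- Splitting an Artinian ring at a non-nilpotent zero-divisor. -/
theorem stmt1 {R : Type*} [CommRing R] [IsArtinianRing R] (a : R)
    (hzd : ∃ b : R, b ≠ 0 ∧ a * b = 0) (hnil : ¬ IsNilpotent a) :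
    ∃ e : R, IsIdempotentElem e ∧
      Function.Bijective
        ((Ideal.Quotient.mk (Ideal.span {e})).prod
          (Ideal.Quotient.mk (Ideal.span {1 - e}))) ∧
      IsNilpotent (Ideal.Quotient.mk (Ideal.span {e}) a) ∧
      IsUnit (Ideal.Quotient.mk (Ideal.span {1 - e}) a) := by
  obtain ⟨n, y, hy⟩ := IsArtinian.exists_pow_succ_smul_dvd (M := R) a 1
  simp only [smul_eq_mul, mul_one, Nat.succ_eq_add_one] at hy
  -- hy : a ^ (n+1) * y = a ^ n
  have key : ∀ k, a ^ (n + k) * y ^ k = a ^ n := by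
    intro k
    induction k with
    | zero => simp
    | succ k ih =>
      calc a ^ (n + (k + 1)) * y ^ (k + 1)
          = (a ^ (n + 1) * y) * (a ^ k * y ^ k) := by ring
        _ = a ^ n * (a ^ k * y ^ k) := by rw [hy]
        _ = a ^ (n + k) * y ^ k := by ring
        _ = a ^ n := ih
  set e := a ^ (n + 1) * y ^ (n + 1) with he
  have hek : a ^ n * e = a ^ n := by
    calc a ^ n * e = a ^ (n + (n + 1)) * y ^ (n + 1) := by rw [he]; ring
      _ = a ^ n := key (n + 1)
  have hidem : IsIdempotentElem e := by
    show e * e = e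
    calc e * e = (a ^ n * e) * (a * y ^ (n + 1)) := by rw [he]; ring
      _ = a ^ n * (a * y ^ (n + 1)) := by rw [hek]
      _ = e := by rw [he]; ring
  have he1 : (e : R) ∈ Ideal.span ({e} : Set R) := Ideal.subset_span rfl
  have he2 : (1 - e : R) ∈ Ideal.span ({1 - e} : Set R) := Ideal.subset_span rfl
  refine ⟨e, hidem, ⟨?_, ?_⟩, ⟨n, ?_⟩, ?_⟩
  · -- injective
    intro r s hrs
    simp only [Prod.ext_iff, RingHom.prod_apply] at hrs
    obtain ⟨h1, h2⟩ := hrs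
    rw [Ideal.Quotient.eq] at h1 h2
    obtain ⟨u, hu⟩ := Ideal.mem_span_singleton'.mp h1
    obtain ⟨v, hv⟩ := Ideal.mem_span_singleton'.mp h2
    have h3 : (r - s) * e = r - s := by
      rw [← hu]; rw [mul_assoc, hidem.eq]
    have h4 : (r - s) * e = 0 := by
      rw [← hv]
      have : e * (1 - e) = 0 := by
        rw [mul_sub, mul_one, hidem.eq, sub_self]
      calc v * (1 - e) * e = v * (e * (1 - e)) := by ring
        _ = 0 := by rw [this, mul_zero]
    have : r - s = 0 := by rw [← h3, h4]
    exact sub_eq_zero.mp this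
  · -- surjective
    rintro ⟨p, q⟩
    obtain ⟨p', rfl⟩ := Ideal.Quotient.mk_surjective p
    obtain ⟨q', rfl⟩ := Ideal.Quotient.mk_surjective q
    refine ⟨p' * (1 - e) + q' * e, ?_⟩
    simp only [RingHom.prod_apply, Prod.ext_iff]
    constructor
    · rw [Ideal.Quotient.eq]
      apply Ideal.mem_span_singleton'.mpr
      exact ⟨q' - p', by ring⟩
    · rw [Ideal.Quotient.eq]
      apply Ideal.mem_span_singleton'.mpr
      exact ⟨p' - q', by ring⟩
  · -- nilpotent
    rw [← map_pow, Ideal.Quotient.eq_zero_iff_mem]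
    exact Ideal.mem_span_singleton'.mpr ⟨a ^ n, hek⟩
  · -- unit
    refine IsUnit.of_mul_eq_one (Ideal.Quotient.mk _ (a ^ n * y ^ (n + 1))) ?_
    rw [← map_mul, ← map_one (Ideal.Quotient.mk (Ideal.span {1 - e})), Ideal.Quotient.eq]
    apply Ideal.mem_span_singleton'.mpr
    exact ⟨-1, by rw [he]; ring⟩
end

section
/- Let R be a commutative ring with finitely many maximal ideals. If f, g ∈ R[x] are primitive polynomials (their coefficients generate the unit ideal), then the product fg is primitive. -/
open Polynomial

/-- Over a commutative ring with finitely many maximal ideals, the product of two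
primitive polynomials (coefficients generating the unit ideal) is primitive. -/
theorem stmt3 {R : Type*} [CommRing R]
    (hfin : {I : Ideal R | I.IsMaximal}.Finite) (f g : R[X])
    (hf : Ideal.span (Set.range f.coeff) = ⊤)
    (hg : Ideal.span (Set.range g.coeff) = ⊤) :
    Ideal.span (Set.range (f * g).coeff) = ⊤ := by
  by_contra h
  obtain ⟨m, hm, hle⟩ := Ideal.exists_le_maximal _ h
  have key : ∀ p : R[X], Ideal.span (Set.range p.coeff) = ⊤ →
      p.map (Ideal.Quotient.mk m) ≠ 0 := by
    intro p hp hmap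
    apply hm.ne_top
    rw [eq_top_iff, ← hp]
    apply Ideal.span_le.mpr
    rintro _ ⟨n, rfl⟩
    have := Polynomial.ext_iff.mp hmap n
    rw [Polynomial.coeff_map, Polynomial.coeff_zero,
      Ideal.Quotient.eq_zero_iff_mem] at this
    exact this
  have hfg : (f * g).map (Ideal.Quotient.mk m) ≠ 0 := by
    haveI := hm.isPrime
    rw [Polynomial.map_mul]
    exact mul_ne_zero (key f hf) (key g hg)
  apply hfg
  ext n
  rw [Polynomial.coeff_map, Polynomial.coeff_zero, Ideal.Quotient.eq_zero_iff_mem]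
  exact hle (Ideal.subset_span ⟨n, rfl⟩)
end

section
/- Let R be a commutative ring, f ∈ R[x] a nonzero polynomial whose content ideal C(f) is nilpotent and principal, generated by c. If f̃ ∈ R[x] satisfies f = c · f̃, then the content of f̃ is not nilpotent. -/
open Polynomial

/-- If `f ≠ 0` has nilpotent content ideal generated by `c` and `f = C c * f̃`,
then the content ideal of `f̃` is not nilpotent. -/
theorem stmt4 {R : Type*} [CommRing R] (f ftilde : R[X]) (c : R)
    (hf0 : f ≠ 0)
    (hgen : Ideal.span (Set.range f.coeff) = Ideal.span {c})
    (hnil : IsNilpotent (Ideal.span (Set.range f.coeff)))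
    (heq : f = C c * ftilde) :
    ¬ IsNilpotent (Ideal.span (Set.range ftilde.coeff)) := by
  rintro ⟨k, hk⟩
  set J : Ideal R := Ideal.span (Set.range ftilde.coeff) with hJ
  -- span {c} ≤ span {c} * J
  have hstep : Ideal.span {c} ≤ Ideal.span {c} * J := by
    rw [← hgen]; nth_rewrite 2 [hgen]
    rw [Ideal.span_le]
    rintro _ ⟨i, rfl⟩
    have : f.coeff i = c * ftilde.coeff i := by
      rw [heq, coeff_C_mul]
    rw [this]
    exact Ideal.mul_mem_mul (Ideal.mem_span_singleton_self c)
      (Ideal.subset_span ⟨i, rfl⟩)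
  have hiter : ∀ n : ℕ, Ideal.span {c} ≤ Ideal.span {c} * J ^ n := by
    intro n
    induction n with
    | zero => simp
    | succ n ih =>
      calc Ideal.span {c} ≤ Ideal.span {c} * J ^ n := ih
        _ ≤ (Ideal.span {c} * J) * J ^ n := Ideal.mul_mono_left hstep
        _ = Ideal.span {c} * J ^ (n + 1) := by ring
  have hc0 : c = 0 := by
    have := hiter k
    rw [hk, mul_zero] at this
    simpa using this (Ideal.mem_span_singleton_self c)
  exact hf0 (by rw [heq, hc0, map_zero, zero_mul])
end

section
/- Let R be a commutative ring whose nilradical N satisfies N^E = 0. If f ∈ R[x] is a unit in R[x], then its inverse f⁻¹ has degree at most deg(f)·E. -/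
open Polynomial

/-- If the nilradical of `R` satisfies `N^E = 0` and `f` is a unit of `R[x]`,
then the degree of the inverse of `f` is at most `deg f * E`. -/
theorem stmt7 {R : Type*} [CommRing R] (E : ℕ) (hE1 : 1 ≤ E)
    (hE : nilradical R ^ E = ⊥) (f g : R[X]) (hfg : f * g = 1) :
    g.natDegree ≤ f.natDegree * E := by
  have hf : IsUnit f := isUnit_iff_exists_inv.mpr ⟨g, hfg⟩
  obtain ⟨hu, hnil⟩ := Polynomial.isUnit_iff_coeff_isUnit_isNilpotent.mp hf
  obtain ⟨v, huv, hvu⟩ := isUnit_iff_exists.mp hu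
  set h : R[X] := f - C (f.coeff 0) with hh
  -- h lies in the ideal generated by nilradical, so h^E = 0
  have hhmem : h ∈ Ideal.map (C : R →+* R[X]) (nilradical R) := by
    rw [Ideal.mem_map_C_iff]
    intro n
    simp only [hh, coeff_sub, coeff_C]
    rcases eq_or_ne n 0 with rfl | hn
    · simp
    · simpa [hn, mem_nilradical] using hnil n hn
  have hE0 : h ^ E = 0 := by
    have hm : h ^ E ∈ Ideal.map (C : R →+* R[X]) (nilradical R) ^ E :=
      Ideal.pow_mem_pow hhmem E
    rw [← Ideal.map_pow, hE, Ideal.map_bot] at hm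
    simpa using hm
  set x : R[X] := -(C v * h) with hx
  have hxE : x ^ E = 0 := by
    rw [hx, neg_pow, mul_pow, hE0, mul_zero, mul_zero]
  -- explicit inverse
  set G : R[X] := C v * ∑ i ∈ Finset.range E, x ^ i with hG
  have hfv : f * C v = 1 - x := by
    have h1 : C (f.coeff 0) * C v = 1 := by rw [← C_mul, huv, C_1]
    have hf' : f = C (f.coeff 0) + h := by rw [hh]; ring
    rw [hx, hf', add_mul, h1]
    ring
  have hfG : f * G = 1 := by
    have := geom_sum_mul x E
    calc f * G = (1 - x) * ∑ i ∈ Finset.range E, x ^ i := by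
          rw [hG, ← mul_assoc, hfv]
      _ = -((∑ i ∈ Finset.range E, x ^ i) * (x - 1)) := by ring
      _ = -(x ^ E - 1) := by rw [geom_sum_mul]
      _ = 1 := by rw [hxE]; ring
  have hgG : g = G := by
    calc g = g * (f * G) := by rw [hfG, mul_one]
      _ = (f * g) * G := by ring
      _ = G := by rw [hfg, one_mul]
  rw [hgG, hG]
  have hxdeg : x.natDegree ≤ f.natDegree := by
    calc x.natDegree = (C v * h).natDegree := by rw [hx, natDegree_neg]
      _ ≤ (C v).natDegree + h.natDegree := natDegree_mul_le
      _ ≤ f.natDegree := by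
          simp only [natDegree_C, zero_add, hh]
          exact (natDegree_sub_le _ _).trans (by simp)
  calc (C v * ∑ i ∈ Finset.range E, x ^ i).natDegree
      ≤ (C v).natDegree + (∑ i ∈ Finset.range E, x ^ i).natDegree := natDegree_mul_le
    _ ≤ (∑ i ∈ Finset.range E, x ^ i).natDegree := by simp
    _ ≤ f.natDegree * E := by
        apply natDegree_sum_le_of_forall_le
        intro i hi
        calc (x ^ i).natDegree ≤ i * x.natDegree := natDegree_pow_le
          _ ≤ E * f.natDegree := by
              exact Nat.mul_le_mul (le_of_lt (Finset.mem_range.mp hi)) hxdeg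
          _ = f.natDegree * E := Nat.mul_comm _ _
end

section
/- Let R be a commutative ring and f = ∑_{i=0}^{d} f_i x^i ∈ R[x] with f_d ≠ 0. Suppose there is 0 ≤ k ≤ d such that f_i is nilpotent for all k+1 ≤ i ≤ d and f_k is a unit. Then there exist a unit u ∈ R[x]^× of degree d − k and a polynomial f̃ ∈ R[x] of degree k with unit leading coefficient such that f = u · f̃. -/
open Polynomial

private lemma stmt9_coeffs_mul_mem {R : Type*} [CommRing R] {p q : R[X]} {J K : Ideal R}
    (hp : ∀ i, p.coeff i ∈ J) (hq : ∀ i, q.coeff i ∈ K) (i : ℕ) :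
    (p * q).coeff i ∈ J * K := by
  rw [coeff_mul]
  exact sum_mem fun x _ => Ideal.mul_mem_mul (hp x.1) (hq x.2)

private lemma stmt9_map_eq_zero {R : Type*} [CommRing R] {p : R[X]} {J : Ideal R}
    (h : ∀ i, p.coeff i ∈ J) : p.map (Ideal.Quotient.mk J) = 0 := by
  ext j
  simp [coeff_map, Ideal.Quotient.eq_zero_iff_mem, h j]

private lemma stmt9_coeffs_mem {R : Type*} [CommRing R] {p : R[X]} {J : Ideal R}
    (h : p.map (Ideal.Quotient.mk J) = 0) (i : ℕ) : p.coeff i ∈ J := by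
  have := congrArg (fun r : (R ⧸ J)[X] => r.coeff i) h
  simpa [Ideal.Quotient.eq_zero_iff_mem] using this

private lemma stmt9_coeffs_modByMonic_mem {R : Type*} [CommRing R] {p q : R[X]} {J : Ideal R}
    (hq : q.Monic) (hp : ∀ i, p.coeff i ∈ J) (i : ℕ) : (p %ₘ q).coeff i ∈ J := by
  refine stmt9_coeffs_mem ?_ i
  rw [map_modByMonic _ hq, stmt9_map_eq_zero hp, zero_modByMonic]

private lemma stmt9_add_mul_modByMonic {R : Type*} [CommRing R] [Nontrivial R] {q : R[X]}
    (hq : q.Monic) (p r : R[X]) : (p + q * r) %ₘ q = p %ₘ q :=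
  (div_modByMonic_unique (r + p /ₘ q) (p %ₘ q) hq
    ⟨by rw [mul_add, add_comm (q * r) (q * (p /ₘ q)), ← add_assoc, modByMonic_add_div p q],
      degree_modByMonic_lt p hq⟩).2

private lemma stmt9_key {R : Type*} [CommRing R] [Nontrivial R] (f : R[X]) (k : ℕ) (c : Rˣ)
    (I : Ideal R) (g0 : R[X]) (hg0 : g0.Monic) (hg0k : g0.natDegree = k)
    (hf0 : ∀ i, (f - C (c : R) * g0).coeff i ∈ I) (n : ℕ) :
    ∃ g : R[X], g.Monic ∧ g.natDegree = k ∧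
      (∀ i, (f %ₘ g).coeff i ∈ I ^ (n + 1)) ∧
      (∀ i, (f /ₘ g - C (c : R)).coeff i ∈ I) := by
  induction n with
  | zero =>
    refine ⟨g0, hg0, hg0k, ?_, ?_⟩
    · intro i
      rw [pow_one]
      have h1 : f %ₘ g0 = (f - C (c : R) * g0) %ₘ g0 := by
        conv_lhs => rw [show f = (f - C (c : R) * g0) + g0 * C (c : R) by ring]
        rw [stmt9_add_mul_modByMonic hg0]
      rw [h1]
      exact stmt9_coeffs_modByMonic_mem hg0 hf0 i
    · intro i
      refine stmt9_coeffs_mem ?_ i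
      have h0 : (f - C (c : R) * g0).map (Ideal.Quotient.mk I) = 0 := stmt9_map_eq_zero hf0
      rw [Polynomial.map_sub] at h0
      have hfmap : f.map (Ideal.Quotient.mk I) = (C (c : R) * g0).map (Ideal.Quotient.mk I) :=
        sub_eq_zero.mp h0
      rw [Polynomial.map_sub, map_divByMonic _ hg0, hfmap, Polynomial.map_mul, map_C,
        mul_comm, mul_divByMonic_cancel_left _ (hg0.map _), sub_self]
  | succ n ih =>
    obtain ⟨g, hgm, hgk, hrem, hquo⟩ := ih
    set r := f %ₘ g with hr
    set q := f /ₘ g with hq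
    have hdeg : (C ((↑c⁻¹ : R)) * r).degree < g.degree := by
      calc (C ((↑c⁻¹ : R)) * r).degree ≤ (C ((↑c⁻¹ : R))).degree + r.degree := degree_mul_le _ _
        _ ≤ 0 + r.degree := add_le_add_left degree_C_le _
        _ = r.degree := zero_add _
        _ < g.degree := degree_modByMonic_lt f hgm
    have hg'm : (g + C ((↑c⁻¹ : R)) * r).Monic := hgm.add_of_left hdeg
    have hg'k : (g + C ((↑c⁻¹ : R)) * r).natDegree = k := by
      rw [natDegree_eq_of_degree_eq (degree_add_eq_left_of_degree_lt hdeg), hgk]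
    set g' := g + C ((↑c⁻¹ : R)) * r with hg'
    have hcc : (C ((↑c⁻¹ : R)) * C (c : R) : R[X]) = 1 := by
      rw [← C_mul, Units.inv_mul, C_1]
    have h1 : r + g * q = f := modByMonic_add_div f g
    have hfg' : C ((↑c⁻¹ : R)) * (r * (C (c : R) - q)) + g' * q = f := by
      rw [hg']
      linear_combination (r : R[X]) * hcc + h1
    refine ⟨g', hg'm, hg'k, ?_, ?_⟩
    · intro i
      have h2 : f %ₘ g' = (C ((↑c⁻¹ : R)) * (r * (C (c : R) - q))) %ₘ g' := by
        conv_lhs => rw [← hfg']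
        rw [stmt9_add_mul_modByMonic hg'm]
      rw [h2]
      refine stmt9_coeffs_modByMonic_mem hg'm (fun j => ?_) i
      rw [coeff_C_mul]
      refine Ideal.mul_mem_left _ _ ?_
      rw [show n + 1 + 1 = (n + 1) + 1 by rfl, pow_succ]
      refine stmt9_coeffs_mul_mem hrem (fun j' => ?_) j
      rw [show (C (c : R) - q) = -(q - C (c : R)) by ring, coeff_neg]
      exact neg_mem (hquo j')
    · have hI1 : ∀ i, r.coeff i ∈ I := fun i => Ideal.pow_le_self (Nat.succ_ne_zero n) (hrem i)
      have hrmap : r.map (Ideal.Quotient.mk I) = 0 := stmt9_map_eq_zero hI1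
      have hg'map : g'.map (Ideal.Quotient.mk I) = g.map (Ideal.Quotient.mk I) := by
        rw [hg', Polynomial.map_add, Polynomial.map_mul, hrmap, mul_zero, add_zero]
      intro i
      refine stmt9_coeffs_mem ?_ i
      rw [Polynomial.map_sub, map_divByMonic _ hg'm, hg'map, ← map_divByMonic _ hgm,
        ← Polynomial.map_sub]
      exact stmt9_map_eq_zero hquo

/-- If all coefficients of `f` above index `k` are nilpotent and the `k`-th
coefficient is a unit, then `f = u * f̃` with `u` a unit of `R[x]` of degree
`d - k` and `f̃` of degree `k` with unit leading coefficient. -/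
theorem stmt9 {R : Type*} [CommRing R] (f : R[X]) (d k : ℕ)
    (hd : f.natDegree = d) (hfd : f.coeff d ≠ 0) (hk : k ≤ d)
    (hnil : ∀ i, k + 1 ≤ i → i ≤ d → IsNilpotent (f.coeff i))
    (hu : IsUnit (f.coeff k)) :
    ∃ u ftilde : R[X], IsUnit u ∧ u.natDegree = d - k ∧
      ftilde.natDegree = k ∧ IsUnit ftilde.leadingCoeff ∧ f = u * ftilde := by
  have : Nontrivial R := nontrivial_of_ne _ _ hfd
  obtain ⟨c, hc⟩ := hu
  set I : Ideal R := Ideal.span (f.coeff '' Set.Ioc k d) with hI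
  have hIrad : I ≤ Ideal.radical ⊥ := by
    rw [Ideal.span_le]
    intro x hx
    obtain ⟨i, hi, rfl⟩ := hx
    obtain ⟨hki, hid⟩ := Set.mem_Ioc.mp hi
    obtain ⟨m, hm⟩ := hnil i hki hid
    exact Ideal.mem_radical_iff.mpr ⟨m, by simp [hm]⟩
  have hInil : ∀ x ∈ I, IsNilpotent x := by
    intro x hx
    obtain ⟨m, hm⟩ := Ideal.mem_radical_iff.mp (hIrad hx)
    exact ⟨m, by simpa using hm⟩
  obtain ⟨m, hm⟩ := Ideal.exists_pow_le_of_le_radical_of_fg hIrad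
    (Submodule.fg_span ((Set.finite_Ioc k d).image f.coeff))
  -- the truncation of f at degree k
  set T : R[X] := ∑ i ∈ Finset.range (k + 1), monomial i (f.coeff i) with hT
  have Tcoeff : ∀ j, T.coeff j = if j ≤ k then f.coeff j else 0 := by
    intro j
    rw [hT, finset_sum_coeff]
    simp only [coeff_monomial]
    rw [Finset.sum_ite_eq' (Finset.range (k + 1)) j (fun i => f.coeff i)]
    simp [Nat.lt_succ_iff]
  set g0 : R[X] := C ((↑c⁻¹ : R)) * T with hg0def
  have hg0c : g0.coeff k = 1 := by
    rw [hg0def, coeff_C_mul, Tcoeff k, if_pos le_rfl, ← hc, Units.inv_mul]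
  have hg0nd : g0.natDegree ≤ k := by
    refine le_trans (natDegree_C_mul_le _ _) (natDegree_sum_le_of_forall_le _ _ fun i hi => ?_)
    exact le_trans (natDegree_monomial_le _) (Nat.lt_succ_iff.mp (Finset.mem_range.mp hi))
  have hg0 : g0.Monic := monic_of_natDegree_le_of_coeff_eq_one k hg0nd hg0c
  have hg0k : g0.natDegree = k :=
    le_antisymm hg0nd (le_natDegree_of_ne_zero (hg0c ▸ one_ne_zero))
  have hf0 : ∀ i, (f - C (c : R) * g0).coeff i ∈ I := by
    intro i
    have hCg : C (c : R) * g0 = T := by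
      rw [hg0def, ← mul_assoc, ← C_mul, Units.mul_inv, C_1, one_mul]
    rw [hCg, coeff_sub, Tcoeff i]
    by_cases hik : i ≤ k
    · simp [hik]
    · rw [if_neg hik, sub_zero]
      by_cases hid : i ≤ d
      · exact Ideal.subset_span
          (Set.mem_image_of_mem _ (Set.mem_Ioc.mpr ⟨Nat.lt_of_not_le hik, hid⟩))
      · rw [coeff_eq_zero_of_natDegree_lt (hd ▸ Nat.lt_of_not_le hid)]
        exact zero_mem I
  obtain ⟨g, hgm, hgk, hrem, hquo⟩ := stmt9_key f k c I g0 hg0 hg0k hf0 m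
  have hrem0 : f %ₘ g = 0 := by
    ext i
    have h1 : (f %ₘ g).coeff i ∈ I ^ m := Ideal.pow_le_pow_right (Nat.le_succ m) (hrem i)
    simpa using hm h1
  set u : R[X] := f /ₘ g with hudef
  have hfu : f = u * g := by
    have := modByMonic_add_div f g
    rw [hrem0, zero_add] at this
    rw [hudef, mul_comm]
    exact this.symm
  have hun : IsNilpotent (u - C (c : R)) := by
    rw [Polynomial.isNilpotent_iff]
    intro i
    exact hInil _ (hquo i)
  have huu : IsUnit u := by
    have := hun.isUnit_add_left_of_commute (isUnit_C.mpr c.isUnit) (Commute.all _ _)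
    simpa using this
  have hund : u.natDegree = d - k := by
    have hune : u ≠ 0 := huu.ne_zero
    have h2 : (u * g).natDegree = u.natDegree + g.natDegree := by
      refine natDegree_mul' ?_
      rw [hgm.leadingCoeff, mul_one]
      exact leadingCoeff_ne_zero.mpr hune
    rw [← hfu, hd, hgk] at h2
    omega
  exact ⟨u, g, huu, hund, hgk, by rw [hgm.leadingCoeff]; exact isUnit_one, hfu⟩
end

section
/- Let R be a commutative ring, f, g ∈ R[x] with g of positive degree and unit leading coefficient. Let c be a generator of the content ideal of f and h ∈ R[x] with f = c·h. Then the reduced resultant ideal satisfies (f, g) ∩ R = c · ((h̄, ḡ) ∩ (R/Ann(c))) lifted to R, i.e., rres_R(f, g) = c · rres_{R/Ann(c)}(h, g). -/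
open Polynomial

private theorem aux13 {R : Type*} [CommRing R] (f g h : R[X]) (c : R)
    (hg : 0 < g.degree) (hm : g.Monic)
    (hc : Ideal.span (Set.range f.coeff) = Ideal.span {c})
    (hfh : f = C c * h) :
    Ideal.comap (C : R →+* R[X]) (Ideal.span {f, g}) =
      Ideal.span {c} *
        Ideal.comap (Ideal.Quotient.mk (Ideal.span {c}).annihilator)
          (Ideal.comap
            (C : R ⧸ (Ideal.span {c}).annihilator →+*
              (R ⧸ (Ideal.span {c}).annihilator)[X])
            (Ideal.span
              {h.map (Ideal.Quotient.mk (Ideal.span {c}).annihilator),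
               g.map (Ideal.Quotient.mk (Ideal.span {c}).annihilator)})) := by
  rcases subsingleton_or_nontrivial R with hR | hR
  · ext x
    have : x = 0 := Subsingleton.elim _ _
    subst this
    simp
  set A := (Ideal.span {c}).annihilator with hA
  set q := Ideal.Quotient.mk A with hq
  have hmemA : ∀ r : R, r ∈ A ↔ r * c = 0 := fun r => by
    rw [hA, Ideal.span, Submodule.mem_annihilator_span_singleton, smul_eq_mul]
  apply le_antisymm
  · -- ⊆ direction
    intro r hr
    rw [Ideal.mem_comap, Ideal.mem_span_pair] at hr
    obtain ⟨p₁, p₂, hr⟩ := hr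
    -- Step 1: r ∈ span {c}
    have hfc : ∀ n, f.coeff n ∈ Ideal.span {c} := fun n => by
      rw [← hc]; exact Ideal.subset_span ⟨n, rfl⟩
    set π := Ideal.Quotient.mk (Ideal.span {c}) with hπ
    have hfπ : f.map π = 0 := by
      ext n
      simp only [coeff_map, coeff_zero, hπ, Ideal.Quotient.eq_zero_iff_mem]
      exact hfc n
    have hgπ : (g.map π).Monic := hm.map π
    have hπr : π r = 0 := by
      rcases subsingleton_or_nontrivial (R ⧸ Ideal.span {c}) with hT | hT
      · exact Subsingleton.elim _ _
      by_contra hne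
      have h1 : (C (π r) : (R ⧸ Ideal.span {c})[X]) = (p₂.map π) * g.map π := by
        have := congrArg (Polynomial.map π) hr
        simp only [Polynomial.map_add, Polynomial.map_mul, hfπ, mul_zero, zero_add,
          map_C] at this
        exact this.symm
      have h2 : (p₂.map π) ≠ 0 := by
        intro h0
        rw [h0, zero_mul, C_eq_zero] at h1
        exact hne h1
      have hdeg : ((p₂.map π) * g.map π).degree = (p₂.map π).degree + (g.map π).degree :=
        hgπ.degree_mul
      have hdg : (g.map π).degree = g.degree := hm.degree_map π
      have hle : (C (π r)).degree ≤ 0 := degree_C_le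
      rw [h1, hdeg, hdg] at hle
      have h3 : (0 : WithBot ℕ) ≤ (p₂.map π).degree := zero_le_degree_iff.2 h2
      have : g.degree ≤ (p₂.map π).degree + g.degree := by
        calc g.degree = 0 + g.degree := (zero_add _).symm
        _ ≤ (p₂.map π).degree + g.degree := add_le_add_left h3 _
      exact absurd (this.trans hle) hg.not_ge
    have hrc : r ∈ Ideal.span {c} := by
      rwa [← Ideal.Quotient.eq_zero_iff_mem]
    obtain ⟨s, hs⟩ := Ideal.mem_span_singleton.1 hrc
    -- Step 2: C c * (C s - p₁ * h) = p₂ * g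
    have hw : C c * (C s - p₁ * h) = p₂ * g := by
      have e1 : (C (c * s) : R[X]) = p₁ * (C c * h) + p₂ * g := by
        rw [← hfh, ← hs]; exact hr.symm
      rw [C_mul] at e1
      linear_combination e1
    -- Step 3: divide by g
    set w := C s - p₁ * h with hwdef
    have hdiv : w %ₘ g + g * (w /ₘ g) = w := modByMonic_add_div w g
    set e := p₂ - C c * (w /ₘ g) with hedef
    have he : C c * (w %ₘ g) = e * g := by
      rw [hedef]
      linear_combination C c * hdiv + hw
    have he0 : e = 0 := by
      by_contra hne
      have hdeg : (e * g).degree = e.degree + g.degree := hm.degree_mul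
      have h1 : (C c * (w %ₘ g)).degree < g.degree := by
        calc (C c * (w %ₘ g)).degree ≤ (C c).degree + (w %ₘ g).degree := degree_mul_le _ _
        _ ≤ 0 + (w %ₘ g).degree := add_le_add_left degree_C_le _
        _ = (w %ₘ g).degree := zero_add _
        _ < g.degree := degree_modByMonic_lt w hm
      have h3 : (0 : WithBot ℕ) ≤ e.degree := zero_le_degree_iff.2 hne
      have : g.degree ≤ (e * g).degree := by
        rw [hdeg]
        calc g.degree = 0 + g.degree := (zero_add _).symm
        _ ≤ e.degree + g.degree := add_le_add_left h3 _
      rw [← he] at this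
      exact absurd (this.trans_lt h1) (lt_irrefl _)
    have hcw : C c * (w %ₘ g) = 0 := by rw [he, he0, zero_mul]
    have hw2 : (w %ₘ g).map q = 0 := by
      ext n
      simp only [coeff_map, coeff_zero, hq, Ideal.Quotient.eq_zero_iff_mem, hmemA]
      have := congrArg (fun p => Polynomial.coeff p n) hcw
      simp only [coeff_C_mul, coeff_zero] at this
      rw [mul_comm] at this
      exact this
    have hsmem : s ∈ Ideal.comap q
        (Ideal.comap (C : R ⧸ A →+* (R ⧸ A)[X]) (Ideal.span {h.map q, g.map q})) := by
      rw [Ideal.mem_comap, Ideal.mem_comap, Ideal.mem_span_pair]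
      refine ⟨p₁.map q, (w /ₘ g).map q, ?_⟩
      have := congrArg (Polynomial.map q) hdiv
      simp only [Polynomial.map_add, Polynomial.map_mul, hw2, zero_add] at this
      have hwmap : w.map q = C (q s) - (p₁.map q) * (h.map q) := by
        rw [hwdef]
        simp [Polynomial.map_sub, Polynomial.map_mul, map_C]
      rw [hwmap] at this
      linear_combination this
    rw [hs]
    exact Ideal.mul_mem_mul (Ideal.mem_span_singleton_self c) hsmem
  · -- ⊇ direction
    rw [Ideal.mul_le]
    intro r hr s hs
    obtain ⟨t, rfl⟩ := Ideal.mem_span_singleton.1 hr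
    rw [Ideal.mem_comap, Ideal.mem_comap, Ideal.mem_span_pair] at hs
    obtain ⟨P, Q, hPQ⟩ := hs
    obtain ⟨p₁, hp₁⟩ := map_surjective q Ideal.Quotient.mk_surjective P
    obtain ⟨p₂, hp₂⟩ := map_surjective q Ideal.Quotient.mk_surjective Q
    have hmap : (p₁ * h + p₂ * g - C s).map q = 0 := by
      simp only [Polynomial.map_sub, Polynomial.map_add, Polynomial.map_mul, hp₁, hp₂,
        map_C, hPQ, sub_self]
    have hann : C c * (p₁ * h + p₂ * g - C s) = 0 := by
      ext n
      have := congrArg (fun p => Polynomial.coeff p n) hmap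
      simp only [coeff_map, coeff_zero, hq, Ideal.Quotient.eq_zero_iff_mem, hmemA] at this
      simp only [coeff_C_mul, coeff_zero]
      rw [mul_comm]
      exact this
    have hcs : c * s ∈ Ideal.comap (C : R →+* R[X]) (Ideal.span {f, g}) := by
      rw [Ideal.mem_comap, Ideal.mem_span_pair]
      refine ⟨p₁, C c * p₂, ?_⟩
      rw [hfh]
      have hCm : (C (c * s) : R[X]) = C c * C s := C_mul
      linear_combination hann - hCm
    have : c * t * s = t * (c * s) := by ring
    rw [this]
    exact Ideal.mul_mem_left _ t hcs

/-- If `g` has positive degree and unit leading coefficient, `c` generates the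
content ideal of `f` and `f = C c * h`, then
`rres_R(f, g) = c · rres_{R/Ann(c)}(h, g)`. -/
theorem stmt13 {R : Type*} [CommRing R] (f g h : R[X]) (c : R)
    (hg : 0 < g.degree) (hglc : IsUnit g.leadingCoeff)
    (hc : Ideal.span (Set.range f.coeff) = Ideal.span {c})
    (hfh : f = C c * h) :
    Ideal.comap (C : R →+* R[X]) (Ideal.span {f, g}) =
      Ideal.span {c} *
        Ideal.comap (Ideal.Quotient.mk (Ideal.span {c}).annihilator)
          (Ideal.comap
            (C : R ⧸ (Ideal.span {c}).annihilator →+*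
              (R ⧸ (Ideal.span {c}).annihilator)[X])
            (Ideal.span
              {h.map (Ideal.Quotient.mk (Ideal.span {c}).annihilator),
               g.map (Ideal.Quotient.mk (Ideal.span {c}).annihilator)})) := by
  obtain ⟨u, hu⟩ := hglc
  set q := Ideal.Quotient.mk (Ideal.span {c}).annihilator with hq
  set g' := C (↑u⁻¹ : R) * g with hg'
  have hm : g'.Monic := monic_C_mul_of_mul_leadingCoeff_eq_one (by
    rw [← hu]; exact u.inv_mul)
  have hgg' : g = C (↑u : R) * g' := by
    rw [hg', ← mul_assoc, ← C_mul, u.mul_inv, C_1, one_mul]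
  have hdeg : 0 < g'.degree := by
    refine lt_of_lt_of_le hg ?_
    calc g.degree = (C (↑u : R) * g').degree := by rw [← hgg']
    _ ≤ (C (↑u : R)).degree + g'.degree := degree_mul_le _ _
    _ ≤ 0 + g'.degree := add_le_add_left degree_C_le _
    _ = g'.degree := zero_add _
  have hunit : IsUnit (C (↑u⁻¹ : R)) := (u⁻¹.isUnit).map (C : R →+* R[X])
  have hspan1 : Ideal.span ({f, g} : Set R[X]) = Ideal.span {f, g'} := by
    rw [Ideal.span_insert, Ideal.span_insert, hg',
      Ideal.span_singleton_mul_left_unit hunit]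
  have hunit2 : IsUnit (C (q ↑u⁻¹) : (R ⧸ (Ideal.span {c}).annihilator)[X]) :=
    ((u⁻¹.isUnit).map q).map C
  have hspan2 : Ideal.span ({h.map q, g.map q} : Set (R ⧸ (Ideal.span {c}).annihilator)[X]) =
      Ideal.span {h.map q, g'.map q} := by
    rw [Ideal.span_insert, Ideal.span_insert, hg', Polynomial.map_mul, map_C,
      Ideal.span_singleton_mul_left_unit hunit2]
  rw [hspan1, hspan2]
  exact aux13 f g' h c hdeg hm hc hfh
end

section
/- Let R be a commutative ring, e ∈ R a nontrivial idempotent, and f, g ∈ R[x]. Let π₁: R[x] → (R/(e))[x] and π₂: R[x] → (R/(1−e))[x] be the coefficientwise projections. Then π_i((f,g) ∩ R) = (π_i(f), π_i(g)) ∩ R/(e_i) for i = 1, 2, i.e., the reduced resultant ideal commutes with the projections. -/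
open Polynomial

lemma stmt15_aux {R : Type*} [CommRing R] (e : R) (he : IsIdempotentElem e)
    (f g : R[X]) :
    Ideal.map (Ideal.Quotient.mk (Ideal.span {e}))
        (Ideal.comap (C : R →+* R[X]) (Ideal.span {f, g})) =
      Ideal.comap (C : R ⧸ Ideal.span {e} →+* (R ⧸ Ideal.span {e})[X])
        (Ideal.span {f.map (Ideal.Quotient.mk (Ideal.span {e})),
                     g.map (Ideal.Quotient.mk (Ideal.span {e}))}) := by
  set J := Ideal.span {e}
  set π := Ideal.Quotient.mk J
  apply le_antisymm
  · rw [Ideal.map_le_iff_le_comap]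
    intro a ha
    rw [Ideal.mem_comap] at ha ⊢
    rw [Ideal.mem_comap]
    rw [Ideal.mem_span_pair] at ha
    obtain ⟨p, q, hpq⟩ := ha
    rw [Ideal.mem_span_pair]
    refine ⟨p.map π, q.map π, ?_⟩
    have := congrArg (Polynomial.map π) hpq
    simpa [Polynomial.map_add, Polynomial.map_mul, Polynomial.map_C] using this
  · intro x hx
    obtain ⟨a, rfl⟩ := Ideal.Quotient.mk_surjective x
    rw [Ideal.mem_comap, Ideal.mem_span_pair] at hx
    obtain ⟨p, q, hpq⟩ := hx
    obtain ⟨P, rfl⟩ := Polynomial.map_surjective π Ideal.Quotient.mk_surjective p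
    obtain ⟨Q, rfl⟩ := Polynomial.map_surjective π Ideal.Quotient.mk_surjective q
    set D : R[X] := C a - P * f - Q * g with hD
    have hDmap : D.map π = 0 := by
      rw [hD]
      simp only [Polynomial.map_sub, Polynomial.map_mul, Polynomial.map_C]
      rw [← hpq]; ring
    have hcoeff : ∀ n, (1 - e) * D.coeff n = 0 := by
      intro n
      have : π (D.coeff n) = 0 := by
        have := congrArg (fun p => Polynomial.coeff p n) hDmap
        simpa using this
      rw [Ideal.Quotient.eq_zero_iff_mem] at this
      rw [Ideal.mem_span_singleton] at this
      obtain ⟨c, hc⟩ := this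
      rw [hc, ← mul_assoc, sub_mul, one_mul, he.eq, sub_self, zero_mul]
    have hzero : C (1 - e) * D = 0 := by
      ext n
      have := hcoeff n
      rw [sub_mul, one_mul] at this
      simpa [sub_mul, coeff_sub, coeff_C_mul] using this
    have hmem : (1 - e) * a ∈ Ideal.comap (C : R →+* R[X]) (Ideal.span {f, g}) := by
      rw [Ideal.mem_comap, Ideal.mem_span_pair]
      refine ⟨C (1 - e) * P, C (1 - e) * Q, ?_⟩
      have : C ((1 - e) * a) = C (1 - e) * (P * f + Q * g + D) := by
        rw [map_mul]; rw [hD]; ring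
      rw [this, mul_add, hzero, add_zero]; ring
    have : π ((1 - e) * a) ∈ Ideal.map π (Ideal.comap (C : R →+* R[X]) (Ideal.span {f, g})) :=
      Ideal.mem_map_of_mem π hmem
    have hπe : π e = 0 := by
      rw [Ideal.Quotient.eq_zero_iff_mem]; exact Ideal.subset_span rfl
    simpa [map_mul, map_sub, hπe] using this

/-- The reduced resultant ideal commutes with the projections associated to a
nontrivial idempotent `e`. -/
theorem stmt15 {R : Type*} [CommRing R] (e : R) (he : IsIdempotentElem e)
    (h0 : e ≠ 0) (h1 : e ≠ 1) (f g : R[X]) :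
    Ideal.map (Ideal.Quotient.mk (Ideal.span {e}))
        (Ideal.comap (C : R →+* R[X]) (Ideal.span {f, g})) =
      Ideal.comap (C : R ⧸ Ideal.span {e} →+* (R ⧸ Ideal.span {e})[X])
        (Ideal.span {f.map (Ideal.Quotient.mk (Ideal.span {e})),
                     g.map (Ideal.Quotient.mk (Ideal.span {e}))}) ∧
    Ideal.map (Ideal.Quotient.mk (Ideal.span {1 - e}))
        (Ideal.comap (C : R →+* R[X]) (Ideal.span {f, g})) =
      Ideal.comap (C : R ⧸ Ideal.span {1 - e} →+* (R ⧸ Ideal.span {1 - e})[X])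
        (Ideal.span {f.map (Ideal.Quotient.mk (Ideal.span {1 - e})),
                     g.map (Ideal.Quotient.mk (Ideal.span {1 - e}))}) :=
  ⟨stmt15_aux e he f g, stmt15_aux (1 - e) he.one_sub f g⟩
end

section
/- Let R be a commutative ring and f, g, h ∈ R[x] non-constant polynomials with deg(fg) = deg(f) + deg(g). Then res(fg, h) = res(f, h) · res(g, h). -/
open Polynomial
open Matrix Finset

/-- The Sylvester matrix of `f` (degree `m = f.natDegree`) and `g`
(degree `n = g.natDegree`). -/
noncomputable def sylvester {R : Type*} [CommRing R] (f g : R[X]) :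
    Matrix (Fin (g.natDegree + f.natDegree)) (Fin (g.natDegree + f.natDegree)) R :=
  fun i j =>
    if (i : ℕ) < g.natDegree then
      (if (i : ℕ) ≤ (j : ℕ) then f.coeff ((j : ℕ) - (i : ℕ)) else 0)
    else
      (if (i : ℕ) - g.natDegree ≤ (j : ℕ) then
        g.coeff ((j : ℕ) - ((i : ℕ) - g.natDegree)) else 0)

/-- The resultant of two polynomials: the determinant of their Sylvester matrix. -/
noncomputable def resultant {R : Type*} [CommRing R] (f g : R[X]) : R :=
  (_root_.sylvester f g).det



noncomputable def sylAux {R : Type*} [CommRing R] (m p : ℕ) (f h : R[X]) :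
    Matrix (Fin (p + m)) (Fin (p + m)) R :=
  fun i j =>
    if (i : ℕ) < p then
      (if (i : ℕ) ≤ (j : ℕ) then f.coeff ((j : ℕ) - (i : ℕ)) else 0)
    else
      (if (i : ℕ) - p ≤ (j : ℕ) then h.coeff ((j : ℕ) - ((i : ℕ) - p)) else 0)

noncomputable def resAux {R : Type*} [CommRing R] (m p : ℕ) (f h : R[X]) : R :=
  (sylAux m p f h).det

lemma resAux_map {R S : Type*} [CommRing R] [CommRing S] (φ : R →+* S) (m p : ℕ) (f h : R[X]) :
    φ (resAux m p f h) = resAux m p (f.map φ) (h.map φ) := by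
  unfold resAux
  rw [RingHom.map_det]
  congr 1
  ext i j
  simp only [RingHom.mapMatrix_apply, Matrix.map_apply, sylAux, coeff_map]
  split <;> split <;> simp

lemma sum_coeff_mul_pow {R : Type*} [CommRing R] (q : R[X]) {i N : ℕ} (hN : q.natDegree + i < N)
    (w : R) :
    ∑ j ∈ Finset.range N, (if i ≤ j then q.coeff (j - i) else 0) * w ^ j = w ^ i * q.eval w := by
  have h1 : ∀ j ∈ Finset.range N, (if i ≤ j then q.coeff (j - i) else 0) * w ^ j
      = if i ≤ j then q.coeff (j - i) * w ^ j else 0 := by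
    intro j _; split <;> simp
  rw [Finset.sum_congr rfl h1, ← Finset.sum_filter]
  have h2 : (Finset.range N).filter (fun j => i ≤ j) = Finset.Ico i N := by
    ext j; simp [Finset.mem_filter, Finset.mem_Ico, Finset.mem_range]; omega
  rw [h2, Finset.sum_Ico_eq_sum_range]
  have h3 : ∀ j ∈ Finset.range (N - i), q.coeff (i + j - i) * w ^ (i + j)
      = w ^ i * (q.coeff j * w ^ j) := by
    intro j _
    rw [Nat.add_sub_cancel_left, pow_add]; ring
  rw [Finset.sum_congr rfl h3, ← Finset.mul_sum, ← Polynomial.eval_eq_sum_range' (by omega)]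

lemma prod_Ioi_castSucc_aux {M : Type*} [CommMonoid M] {n : ℕ} (f : Fin (n+1) → M) (i : Fin n) :
    ∏ j ∈ Finset.Ioi (Fin.castSucc i), f j
      = (∏ j ∈ Finset.Ioi i, f (Fin.castSucc j)) * f (Fin.last n) := by
  have hset : Finset.Ioi (Fin.castSucc i)
      = insert (Fin.last n) ((Finset.Ioi i).map ⟨Fin.castSucc, Fin.castSucc_injective n⟩) := by
    ext j
    induction j using Fin.lastCases with
    | last => simp [Fin.castSucc_lt_last]
    | cast j => simp [(Fin.castSucc_lt_last j).ne,
        Fin.castSucc_lt_castSucc_iff, (Fin.castSucc_injective n).eq_iff]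
  rw [hset, Finset.prod_insert (by
      simp only [Finset.mem_map, Function.Embedding.coeFn_mk, Finset.mem_Ioi, not_exists, not_and]
      exact fun x _ => (Fin.castSucc_lt_last x).ne), Finset.prod_map]
  simp [mul_comm]

lemma det_vandermonde_snoc {R : Type*} [CommRing R] {n : ℕ} (v : Fin n → R) (a : R) :
    (Matrix.vandermonde (Fin.snoc v a)).det
      = (Matrix.vandermonde v).det * ∏ i, (a - v i) := by
  set w : Fin (n+1) → R := Fin.snoc v a with hw
  rw [Matrix.det_vandermonde, Matrix.det_vandermonde, Fin.prod_univ_castSucc]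
  have hlast : Finset.Ioi (Fin.last n) = ∅ := by
    ext j; simp [Fin.le_last j, not_lt.mpr]
  rw [hlast]
  simp only [Finset.prod_empty, mul_one]
  have hterm : ∀ i : Fin n, (∏ j ∈ Finset.Ioi (Fin.castSucc i), (w j - w (Fin.castSucc i)))
      = (∏ j ∈ Finset.Ioi i, (v j - v i)) * (a - v i) := by
    intro i
    rw [prod_Ioi_castSucc_aux]
    simp [hw]
  rw [Finset.prod_congr rfl (fun i _ => hterm i), Finset.prod_mul_distrib]

lemma det_vandermonde_append {R : Type*} [CommRing R] {p m : ℕ} (y : Fin p → R) (x : Fin m → R) :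
    (Matrix.vandermonde (Fin.append y x)).det
      = (Matrix.vandermonde y).det * (Matrix.vandermonde x).det
        * ∏ k, ∏ l, (x k - y l) := by
  induction m with
  | zero =>
      have hyx : Fin.append y x = y := funext fun i => Fin.append_left y x i
      rw [hyx]
      simp
  | succ m ih =>
      have hx : x = Fin.snoc (Fin.init x) (x (Fin.last m)) := (Fin.snoc_init_self x).symm
      set u := Fin.init x with hu
      set b := x (Fin.last m) with hb
      rw [hx, Fin.append_snoc, det_vandermonde_snoc, det_vandermonde_snoc, ih]
      have h1 : (∏ i, (b - Fin.append y u i)) = (∏ l, (b - y l)) * ∏ k, (b - u k) := by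
        rw [Fin.prod_univ_add (fun i => b - Fin.append y u i)]
        simp
      have h2 : (∏ k, ∏ l, ((Fin.snoc u b : Fin (m+1) → R) k - y l))
          = (∏ k, ∏ l, (u k - y l)) * ∏ l, (b - y l) := by
        rw [Fin.prod_univ_castSucc (fun k => ∏ l, ((Fin.snoc u b : Fin (m+1) → R) k - y l))]
        simp
      simp only [Nat.add_eq]
      rw [h1, h2]
      ring

lemma natDegree_prod_X_sub_C {K : Type*} [CommRing K] [Nontrivial K] {m : ℕ} (x : Fin m → K) :
    (∏ k, (X - C (x k))).natDegree = m := by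
  rw [Polynomial.natDegree_prod_of_monic _ _ (fun k _ => monic_X_sub_C (x k))]
  simp

lemma eval_prod_X_sub_C_eq_zero {K : Type*} [CommRing K] {m : ℕ} (x : Fin m → K) (k : Fin m) :
    (∏ k', (X - C (x k'))).eval (x k) = 0 := by
  rw [Polynomial.eval_prod]
  exact Finset.prod_eq_zero (Finset.mem_univ k) (by simp)

lemma resAux_split {K : Type*} [Field K] {m p : ℕ} (x : Fin m → K) (y : Fin p → K)
    (hinj : Function.Injective (Fin.append y x)) :
    resAux m p (∏ k, (X - C (x k))) (∏ l, (X - C (y l)))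
      = (-1) ^ (m * p) * ∏ k, ∏ l, (x k - y l) := by
  set F : K[X] := ∏ k, (X - C (x k)) with hF
  set H : K[X] := ∏ l, (X - C (y l)) with hH
  have hdF : F.natDegree = m := natDegree_prod_X_sub_C x
  have hdH : H.natDegree = p := natDegree_prod_X_sub_C y
  set z : Fin (p + m) → K := Fin.append y x with hz
  have key : sylAux m p F H * (Matrix.vandermonde z)ᵀ
      = Matrix.reindex finSumFinEquiv finSumFinEquiv
        (Matrix.fromBlocks
          (Matrix.of fun (i l : Fin p) => y l ^ (i : ℕ) * F.eval (y l)) 0 0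
          (Matrix.of fun (k l : Fin m) => x l ^ (k : ℕ) * H.eval (x l))) := by
    ext i l
    rw [Matrix.mul_apply]
    have hentry : ∀ w : K, ∑ j, sylAux m p F H i j * w ^ (j : ℕ)
        = if (i : ℕ) < p then w ^ (i : ℕ) * F.eval w
          else w ^ ((i : ℕ) - p) * H.eval w := by
      intro w
      by_cases hi : (i : ℕ) < p
      · simp only [hi, if_true, sylAux]
        rw [Fin.sum_univ_eq_sum_range (fun j => (if (i : ℕ) ≤ j then F.coeff (j - (i : ℕ)) else 0) * w ^ j)]
        exact sum_coeff_mul_pow F (by omega) w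
      · simp only [hi, if_false, sylAux]
        rw [Fin.sum_univ_eq_sum_range (fun j => (if (i : ℕ) - p ≤ j then H.coeff (j - ((i : ℕ) - p)) else 0) * w ^ j)]
        refine sum_coeff_mul_pow H ?_ w
        have := i.isLt
        omega
    have hV : ∀ j, (Matrix.vandermonde z)ᵀ j l = z l ^ (j : ℕ) := fun j => rfl
    simp only [hV]
    rw [hentry (z l)]
    induction i using Fin.addCases with
    | left i' =>
        have hi' : ((Fin.castAdd m i' : Fin (p + m)) : ℕ) = (i' : ℕ) := rfl
        rw [hi']
        simp only [i'.isLt, if_true]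
        induction l using Fin.addCases with
        | left l' =>
            have : z (Fin.castAdd m l') = y l' := Fin.append_left y x l'
            rw [this]
            simp [Matrix.reindex_apply, Matrix.submatrix_apply]
        | right l' =>
            have : z (Fin.natAdd p l') = x l' := Fin.append_right y x l'
            rw [this, eval_prod_X_sub_C_eq_zero x l']
            simp [Matrix.reindex_apply, Matrix.submatrix_apply]
    | right k =>
        have hk : ((Fin.natAdd p k : Fin (p + m)) : ℕ) = p + (k : ℕ) := rfl
        rw [hk, if_neg (by omega), Nat.add_sub_cancel_left]
        induction l using Fin.addCases with
        | left l' =>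
            have : z (Fin.castAdd m l') = y l' := Fin.append_left y x l'
            rw [this, eval_prod_X_sub_C_eq_zero y l']
            simp [Matrix.reindex_apply, Matrix.submatrix_apply]
        | right l' =>
            have : z (Fin.natAdd p l') = x l' := Fin.append_right y x l'
            rw [this]
            simp [Matrix.reindex_apply, Matrix.submatrix_apply]
  have hdet : resAux m p F H * (Matrix.vandermonde z).det
      = ((Matrix.vandermonde y).det * ∏ l, F.eval (y l))
        * ((Matrix.vandermonde x).det * ∏ k, H.eval (x k)) := by
    have hmul := congrArg Matrix.det key
    rw [Matrix.det_mul, Matrix.det_transpose, Matrix.det_reindex_self,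
      Matrix.det_fromBlocks_zero₁₂] at hmul
    have hB1 : (Matrix.of fun (i l : Fin p) => y l ^ (i : ℕ) * F.eval (y l)).det
        = (Matrix.vandermonde y).det * ∏ l, F.eval (y l) := by
      have hb : (Matrix.of fun (i l : Fin p) => y l ^ (i : ℕ) * F.eval (y l))
          = (Matrix.vandermonde y)ᵀ * Matrix.diagonal (fun l => F.eval (y l)) := by
        ext i l; simp [Matrix.mul_diagonal, Matrix.transpose_apply]
      rw [hb, Matrix.det_mul, Matrix.det_transpose, Matrix.det_diagonal]
    have hB2 : (Matrix.of fun (k l : Fin m) => x l ^ (k : ℕ) * H.eval (x l)).det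
        = (Matrix.vandermonde x).det * ∏ k, H.eval (x k) := by
      have hb : (Matrix.of fun (k l : Fin m) => x l ^ (k : ℕ) * H.eval (x l))
          = (Matrix.vandermonde x)ᵀ * Matrix.diagonal (fun k => H.eval (x k)) := by
        ext i l; simp [Matrix.mul_diagonal, Matrix.transpose_apply]
      rw [hb, Matrix.det_mul, Matrix.det_transpose, Matrix.det_diagonal]
    rw [hB1, hB2] at hmul
    exact hmul
  have hFy : ∀ l, F.eval (y l) = ∏ k, (y l - x k) := by
    intro l; simp [hF, Polynomial.eval_prod]
  have hHx : ∀ k, H.eval (x k) = ∏ l, (x k - y l) := by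
    intro k; simp [hH, Polynomial.eval_prod]
  have hvz : (Matrix.vandermonde z).det ≠ 0 := Matrix.det_vandermonde_ne_zero_iff.mpr hinj
  apply mul_right_cancel₀ hvz
  rw [hdet]
  have hva : (Matrix.vandermonde z).det
      = (Matrix.vandermonde y).det * (Matrix.vandermonde x).det * ∏ k, ∏ l, (x k - y l) :=
    det_vandermonde_append y x
  rw [hva]
  simp only [hFy, hHx]
  have hswap : (∏ l, ∏ k, (y l - x k)) = (-1) ^ (m * p) * ∏ k, ∏ l, (x k - y l) := by
    have h1 : ∀ l, (∏ k, (y l - x k)) = (-1) ^ m * ∏ k, (x k - y l) := by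
      intro l
      rw [show (∏ k, (y l - x k)) = ∏ k, (-1) * (x k - y l) by
        apply Finset.prod_congr rfl; intro k _; ring]
      rw [Finset.prod_mul_distrib, Finset.prod_const]
      simp
    rw [Finset.prod_congr rfl (fun l _ => h1 l), Finset.prod_mul_distrib, Finset.prod_const,
      ← pow_mul, Finset.prod_comm, Finset.card_univ, Fintype.card_fin]
  rw [hswap]
  ring

lemma resAux_split_gen {R : Type*} [CommRing R] {m p : ℕ} (x : Fin m → R) (y : Fin p → R) :
    resAux m p (∏ k, (X - C (x k))) (∏ l, (X - C (y l)))
      = (-1) ^ (m * p) * ∏ k, ∏ l, (x k - y l) := by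
  set A := MvPolynomial (Fin m ⊕ Fin p) ℤ
  set Kf := FractionRing A
  set φ : A →+* Kf := algebraMap A Kf with hφ
  set X' : Fin m → Kf := fun k => φ (MvPolynomial.X (Sum.inl k)) with hX'
  set Y' : Fin p → Kf := fun l => φ (MvPolynomial.X (Sum.inr l)) with hY'
  have hinj : Function.Injective (Fin.append Y' X') := by
    have h1 : Fin.append Y' X'
        = (fun s : Fin m ⊕ Fin p => φ (MvPolynomial.X s)) ∘
          (Fin.append (Sum.inr : Fin p → Fin m ⊕ Fin p) (Sum.inl : Fin m → Fin m ⊕ Fin p)) := by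
      funext i
      induction i using Fin.addCases with
      | left l => simp [Fin.append_left, hY']
      | right k => simp [Fin.append_right, hX']
    have h2 : Fin.append (Sum.inr : Fin p → Fin m ⊕ Fin p) (Sum.inl : Fin m → Fin m ⊕ Fin p)
        = Sum.swap ∘ ⇑(finSumFinEquiv (m := p) (n := m)).symm := by
      funext i
      induction i using Fin.addCases with
      | left l => simp [Fin.append_left]
      | right k => simp [Fin.append_right]
    rw [h1, h2]
    exact ((IsFractionRing.injective A Kf).comp MvPolynomial.X_injective).comp
      ((Equiv.injective (Equiv.sumComm _ _)).comp (finSumFinEquiv.symm.injective))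
  have hsplit := resAux_split X' Y' hinj
  have hA : resAux m p (∏ k, (X - C (MvPolynomial.X (Sum.inl k) : A)))
        (∏ l, (X - C (MvPolynomial.X (Sum.inr l) : A)))
      = (-1) ^ (m * p) * ∏ k, ∏ l,
          ((MvPolynomial.X (Sum.inl k) : A) - MvPolynomial.X (Sum.inr l)) := by
    apply IsFractionRing.injective A Kf
    rw [resAux_map φ]
    rw [Polynomial.map_prod, Polynomial.map_prod]
    simp only [Polynomial.map_sub, Polynomial.map_X, Polynomial.map_C]
    rw [hsplit]
    simp [map_prod, hX', hY', hφ]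
  let ψ : A →+* R := (MvPolynomial.aeval (Sum.elim x y) : A →ₐ[ℤ] R).toRingHom
  have hfin := congrArg ψ hA
  rw [resAux_map ψ, Polynomial.map_prod, Polynomial.map_prod] at hfin
  simp only [Polynomial.map_sub, Polynomial.map_X, Polynomial.map_C, map_prod,
    MvPolynomial.aeval_X, AlgHom.toRingHom_eq_coe, RingHom.coe_coe, Sum.elim_inl, Sum.elim_inr,
    _root_.map_mul, _root_.map_pow, map_neg, _root_.map_one, map_sub, ψ] at hfin
  have haX : ∀ s : Fin m ⊕ Fin p,
      (MvPolynomial.aeval (Sum.elim x y) : A →ₐ[ℤ] R) (MvPolynomial.X s) = Sum.elim x y s :=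
    fun s => MvPolynomial.aeval_X _ s
  simp only [haX, Sum.elim_inl, Sum.elim_inr] at hfin
  exact hfin

lemma resAux_C_mul_left {R : Type*} [CommRing R] (m p : ℕ) (c : R) (f h : R[X]) :
    resAux m p (C c * f) h = c ^ p * resAux m p f h := by
  have hmat : sylAux m p (C c * f) h
      = Matrix.of (fun i j : Fin (p + m) =>
          (if (i : ℕ) < p then c else 1) * sylAux m p f h i j) := by
    ext i j
    simp only [sylAux, Matrix.of_apply, Polynomial.coeff_C_mul]
    split <;> split <;> ring
  unfold resAux
  rw [hmat, Matrix.det_mul_column]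
  congr 1
  rw [Fin.prod_univ_add (fun i : Fin (p + m) => if (i : ℕ) < p then c else 1)]
  have h1 : ∀ i : Fin p, (if ((Fin.castAdd m i : Fin (p+m)) : ℕ) < p then c else 1) = c := by
    intro i; simp [i.isLt]
  have h2 : ∀ k : Fin m, (if ((Fin.natAdd p k : Fin (p+m)) : ℕ) < p then c else 1) = 1 := by
    intro k; simp
  rw [Finset.prod_congr rfl (fun i _ => h1 i), Finset.prod_congr rfl (fun k _ => h2 k)]
  simp

lemma resAux_C_mul_right {R : Type*} [CommRing R] (m p : ℕ) (d : R) (f h : R[X]) :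
    resAux m p f (C d * h) = d ^ m * resAux m p f h := by
  have hmat : sylAux m p f (C d * h)
      = Matrix.of (fun i j : Fin (p + m) =>
          (if (i : ℕ) < p then 1 else d) * sylAux m p f h i j) := by
    ext i j
    simp only [sylAux, Matrix.of_apply, Polynomial.coeff_C_mul]
    split <;> split <;> ring
  unfold resAux
  rw [hmat, Matrix.det_mul_column]
  congr 1
  rw [Fin.prod_univ_add (fun i : Fin (p + m) => if (i : ℕ) < p then 1 else d)]
  have h1 : ∀ i : Fin p, (if ((Fin.castAdd m i : Fin (p+m)) : ℕ) < p then 1 else d) = 1 := by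
    intro i; simp [i.isLt]
  have h2 : ∀ k : Fin m, (if ((Fin.natAdd p k : Fin (p+m)) : ℕ) < p then 1 else d) = d := by
    intro k; simp
  rw [Finset.prod_congr rfl (fun i _ => h1 i), Finset.prod_congr rfl (fun k _ => h2 k)]
  simp

lemma multiset_prod_fin {α : Type*} (s : Multiset α) {m : ℕ} (hm : Multiset.card s = m) :
    ∃ x : Fin m → α, ∀ {M : Type*} [CommMonoid M] (φ : α → M),
      (s.map φ).prod = ∏ k, φ (x k) := by
  have hlen : m = s.toList.length := by rw [Multiset.length_toList, hm]
  refine ⟨fun i => s.toList.get (Fin.cast hlen i), ?_⟩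
  intro M _ φ
  have h1 : (s.map φ).prod = ((s.toList.map φ) : List M).prod := by
    conv_lhs => rw [← Multiset.coe_toList s]
    rw [Multiset.map_coe, Multiset.prod_coe]
  rw [h1]
  have h2 : ∏ k : Fin m, φ (s.toList.get (Fin.cast hlen k))
      = ∏ j : Fin s.toList.length, φ (s.toList.get j) :=
    Fintype.prod_equiv (finCongr hlen) _ _ (fun k => rfl)
  rw [h2, Fin.prod_univ_def]
  rw [show (fun j => φ (s.toList.get j)) = φ ∘ s.toList.get from rfl, ← List.map_map,
    List.map_get_finRange]

section polyOfFn
variable {S : Type*} [CommRing S] {m : ℕ}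

noncomputable def polyOfFn (m : ℕ) (a : Fin (m+1) → S) : S[X] := ∑ i, C (a i) * X ^ (i : ℕ)

lemma polyOfFn_natDegree_le (a : Fin (m+1) → S) : (polyOfFn m a).natDegree ≤ m := by
  refine Polynomial.natDegree_sum_le_of_forall_le _ _ (fun i _ => ?_)
  exact le_trans (Polynomial.natDegree_C_mul_le _ _)
    (le_trans (Polynomial.natDegree_X_pow_le _) (Nat.le_of_lt_succ i.isLt))

lemma polyOfFn_coeff (a : Fin (m+1) → S) (k : Fin (m+1)) :
    (polyOfFn m a).coeff k = a k := by
  unfold polyOfFn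
  rw [Polynomial.finset_sum_coeff]
  rw [Finset.sum_eq_single k]
  · simp
  · intro i _ hne
    rw [Polynomial.coeff_C_mul, Polynomial.coeff_X_pow, if_neg (by
      simpa [Fin.val_eq_val, eq_comm] using hne), mul_zero]
  · simp

lemma polyOfFn_natDegree (a : Fin (m+1) → S) (ha : a (Fin.last m) ≠ 0) :
    (polyOfFn m a).natDegree = m := by
  refine le_antisymm (polyOfFn_natDegree_le a) ?_
  refine Polynomial.le_natDegree_of_ne_zero ?_
  have hc := polyOfFn_coeff a (Fin.last m)
  intro hcon
  apply ha
  rw [← hc]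
  show (polyOfFn m a).coeff ((Fin.last m : Fin (m+1)) : ℕ) = 0
  rw [Fin.val_last, hcon]

lemma polyOfFn_map {S' : Type*} [CommRing S'] (χ : S →+* S') (a : Fin (m+1) → S) :
    (polyOfFn m a).map χ = polyOfFn m (χ ∘ a) := by
  unfold polyOfFn
  rw [Polynomial.map_sum]
  simp

lemma polyOfFn_self (q : S[X]) : polyOfFn q.natDegree (fun i => q.coeff i) = q := by
  unfold polyOfFn
  conv_rhs => rw [Polynomial.as_sum_range' q (q.natDegree + 1) (Nat.lt_succ_self _)]
  rw [Fin.sum_univ_eq_sum_range (fun i => C (q.coeff i) * X ^ i)]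
  simp [Polynomial.C_mul_X_pow_eq_monomial]

end polyOfFn

lemma resAux_of_splits {K : Type*} [Field K] (f h : K[X]) (hf0 : f ≠ 0) (hh0 : h ≠ 0)
    (hfs : f.Splits) (hhs : h.Splits) :
    resAux f.natDegree h.natDegree f h
      = (-1) ^ (f.natDegree * h.natDegree) * f.leadingCoeff ^ h.natDegree
        * h.leadingCoeff ^ f.natDegree
        * ((f.roots.map (fun a => ((h.roots.map (fun b => a - b)).prod))).prod) := by
  set m := f.natDegree
  set p := h.natDegree
  obtain ⟨x, hx⟩ := multiset_prod_fin f.roots ((Polynomial.splits_iff_card_roots).mp hfs)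
  obtain ⟨y, hy⟩ := multiset_prod_fin h.roots ((Polynomial.splits_iff_card_roots).mp hhs)
  have hf : f = C f.leadingCoeff * ∏ k, (X - C (x k)) := by
    conv_lhs => rw [hfs.eq_prod_roots]
    rw [hx (fun a => X - C a)]
  have hh : h = C h.leadingCoeff * ∏ l, (X - C (y l)) := by
    conv_lhs => rw [hhs.eq_prod_roots]
    rw [hy (fun a => X - C a)]
  calc resAux m p f h
      = resAux m p (C f.leadingCoeff * ∏ k, (X - C (x k)))
          (C h.leadingCoeff * ∏ l, (X - C (y l))) := by rw [← hf, ← hh]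
    _ = f.leadingCoeff ^ p * (h.leadingCoeff ^ m
          * resAux m p (∏ k, (X - C (x k))) (∏ l, (X - C (y l)))) := by
        rw [resAux_C_mul_left, resAux_C_mul_right]
    _ = f.leadingCoeff ^ p * (h.leadingCoeff ^ m
          * ((-1) ^ (m * p) * ∏ k, ∏ l, (x k - y l))) := by rw [resAux_split_gen]
    _ = _ := by
        rw [hx (fun a => ((h.roots.map (fun b => a - b)).prod))]
        have : ∀ k, (h.roots.map (fun b => x k - b)).prod = ∏ l, (x k - y l) :=
          fun k => hy (fun b => x k - b)
        rw [Finset.prod_congr rfl (fun k _ => this k)]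
        ring

lemma resAux_mul_left_algClosed {K : Type*} [Field K] [IsAlgClosed K] (f g h : K[X])
    (hf0 : f ≠ 0) (hg0 : g ≠ 0) (hh0 : h ≠ 0) :
    resAux (f * g).natDegree h.natDegree (f * g) h
      = resAux f.natDegree h.natDegree f h * resAux g.natDegree h.natDegree g h := by
  have hfg0 : f * g ≠ 0 := mul_ne_zero hf0 hg0
  have hsf : f.Splits := IsAlgClosed.splits f
  have hsg : g.Splits := IsAlgClosed.splits g
  have hsh : h.Splits := IsAlgClosed.splits h
  have hsfg : (f * g).Splits := IsAlgClosed.splits _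
  rw [resAux_of_splits f h hf0 hh0 hsf hsh, resAux_of_splits g h hg0 hh0 hsg hsh,
    resAux_of_splits (f * g) h hfg0 hh0 hsfg hsh]
  rw [Polynomial.natDegree_mul hf0 hg0, Polynomial.leadingCoeff_mul,
    Polynomial.roots_mul hfg0, Multiset.map_add, Multiset.prod_add]
  rw [add_mul, pow_add, mul_pow, pow_add]
  ring

lemma resultant_eq_resAux {R : Type*} [CommRing R] (f g : R[X]) :
    _root_.resultant f g = resAux f.natDegree g.natDegree f g := rfl

/-- Multiplicativity of the resultant. -/
theorem stmt17 {R : Type*} [CommRing R] (f g h : R[X])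
    (hf : 0 < f.degree) (hg : 0 < g.degree) (hh : 0 < h.degree)
    (hdeg : (f * g).natDegree = f.natDegree + g.natDegree) :
    _root_.resultant (f * g) h = _root_.resultant f h * _root_.resultant g h := by
  set m := f.natDegree with hm
  set n := g.natDegree with hn
  set p := h.natDegree with hp
  set σ := (Fin (m+1) ⊕ (Fin (n+1) ⊕ Fin (p+1))) with hσ
  set A := MvPolynomial σ ℤ with hA
  set F : A[X] := polyOfFn m (fun i => MvPolynomial.X (Sum.inl i)) with hF
  set G : A[X] := polyOfFn n (fun i => MvPolynomial.X (Sum.inr (Sum.inl i))) with hG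
  set H : A[X] := polyOfFn p (fun i => MvPolynomial.X (Sum.inr (Sum.inr i))) with hH
  have keyA : resAux (m+n) p (F * G) H = resAux m p F H * resAux n p G H := by
    set K := FractionRing A with hK
    set Kb := AlgebraicClosure K with hKb
    set φ : A →+* Kb := (algebraMap K Kb).comp (algebraMap A K) with hφ
    have hφinj : Function.Injective φ :=
      (RingHom.injective (algebraMap K Kb)).comp (IsFractionRing.injective A K)
    apply hφinj
    rw [resAux_map φ, _root_.map_mul φ, resAux_map φ, resAux_map φ, Polynomial.map_mul]
    have hne : ∀ s : σ, φ (MvPolynomial.X s) ≠ 0 := by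
      intro s hcon
      exact MvPolynomial.X_ne_zero s (hφinj (by simpa using hcon))
    have hFd : (F.map φ).natDegree = m := by
      rw [hF, polyOfFn_map]
      exact polyOfFn_natDegree _ (hne _)
    have hGd : (G.map φ).natDegree = n := by
      rw [hG, polyOfFn_map]
      exact polyOfFn_natDegree _ (hne _)
    have hHd : (H.map φ).natDegree = p := by
      rw [hH, polyOfFn_map]
      exact polyOfFn_natDegree _ (hne _)
    have hF0 : F.map φ ≠ 0 := by
      intro hcon
      have h2 := polyOfFn_coeff (⇑φ ∘ fun i => MvPolynomial.X (Sum.inl i)) (Fin.last m)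
      rw [← polyOfFn_map, ← hF, hcon] at h2
      exact hne (Sum.inl (Fin.last m)) (by simpa using h2.symm)
    have hG0 : G.map φ ≠ 0 := by
      intro hcon
      have h2 := polyOfFn_coeff (⇑φ ∘ fun i => MvPolynomial.X (Sum.inr (Sum.inl i))) (Fin.last n)
      rw [← polyOfFn_map, ← hG, hcon] at h2
      exact hne (Sum.inr (Sum.inl (Fin.last n))) (by simpa using h2.symm)
    have hH0 : H.map φ ≠ 0 := by
      intro hcon
      have h2 := polyOfFn_coeff (⇑φ ∘ fun i => MvPolynomial.X (Sum.inr (Sum.inr i))) (Fin.last p)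
      rw [← polyOfFn_map, ← hH, hcon] at h2
      exact hne (Sum.inr (Sum.inr (Fin.last p))) (by simpa using h2.symm)
    have hd : ((F.map φ) * (G.map φ)).natDegree = m + n := by
      rw [Polynomial.natDegree_mul hF0 hG0, hFd, hGd]
    calc resAux (m+n) p (F.map φ * G.map φ) (H.map φ)
        = resAux ((F.map φ) * (G.map φ)).natDegree (H.map φ).natDegree
            (F.map φ * G.map φ) (H.map φ) := by rw [hd, hHd]
      _ = resAux (F.map φ).natDegree (H.map φ).natDegree (F.map φ) (H.map φ)
            * resAux (G.map φ).natDegree (H.map φ).natDegree (G.map φ) (H.map φ) :=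
          resAux_mul_left_algClosed _ _ _ hF0 hG0 hH0
      _ = resAux m p (F.map φ) (H.map φ) * resAux n p (G.map φ) (H.map φ) := by
          rw [hFd, hGd, hHd]
  -- specialize to R
  set v : σ → R := Sum.elim (fun i => f.coeff i)
      (Sum.elim (fun i => g.coeff i) (fun i => h.coeff i)) with hv
  set ψ : A →+* R := (MvPolynomial.aeval v : A →ₐ[ℤ] R).toRingHom with hψ
  have haX : ∀ s : σ, ψ (MvPolynomial.X s) = v s := fun s => MvPolynomial.aeval_X v s
  have hFψ : F.map ψ = f := by
    rw [hF, polyOfFn_map]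
    have : (ψ ∘ fun i => MvPolynomial.X (Sum.inl i)) = fun i : Fin (m+1) => f.coeff i := by
      funext i; simp [haX, hv]
    rw [this, hm]
    exact polyOfFn_self f
  have hGψ : G.map ψ = g := by
    rw [hG, polyOfFn_map]
    have : (ψ ∘ fun i => MvPolynomial.X (Sum.inr (Sum.inl i)))
        = fun i : Fin (n+1) => g.coeff i := by
      funext i; simp [haX, hv]
    rw [this, hn]
    exact polyOfFn_self g
  have hHψ : H.map ψ = h := by
    rw [hH, polyOfFn_map]
    have : (ψ ∘ fun i => MvPolynomial.X (Sum.inr (Sum.inr i)))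
        = fun i : Fin (p+1) => h.coeff i := by
      funext i; simp [haX, hv]
    rw [this, hp]
    exact polyOfFn_self h
  have hfin := congrArg ψ keyA
  rw [resAux_map ψ, _root_.map_mul ψ, resAux_map ψ, resAux_map ψ, Polynomial.map_mul,
    hFψ, hGψ, hHψ] at hfin
  rw [resultant_eq_resAux, resultant_eq_resAux, resultant_eq_resAux, hdeg]
  exact hfin
end

section
/- Let R be a commutative ring in which every maximal ideal has a residue field, u ∈ R[x] a unit of R[x], and f ∈ R[x] a polynomial with unit leading coefficient and positive degree. Then res(u, f) is a unit of R, provided R has finitely many maximal ideals (e.g., R is Artinian). -/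
open Polynomial

/-- A unit modulo the nilradical lifts to a unit. -/
lemma isUnit_of_mk_nilradical_isUnit {R : Type*} [CommRing R] {x : R}
    (h : IsUnit (Ideal.Quotient.mk (nilradical R) x)) : IsUnit x := by
  obtain ⟨y, hy⟩ := h.exists_right_inv
  obtain ⟨z, rfl⟩ := Ideal.Quotient.mk_surjective y
  have hz : x * z - 1 ∈ nilradical R := by
    rw [← Ideal.Quotient.eq_zero_iff_mem]
    simp [hy]
  have : IsUnit (x * z) := by
    have := (mem_nilradical.mp hz).isUnit_add_one
    simpa using this
  exact isUnit_of_mul_isUnit_left this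

/-- Over an Artinian commutative ring, the resultant of a unit `u` of `R[x]`
and a polynomial `f` of positive degree with unit leading coefficient is a
unit of `R`. -/
theorem stmt18 {R : Type*} [CommRing R] [IsArtinianRing R] (u f : R[X])
    (hu : IsUnit u) (hf : 0 < f.degree) (hlc : IsUnit f.leadingCoeff) :
    IsUnit (_root_.resultant u f) := by
  obtain ⟨hu0, hunil⟩ := Polynomial.isUnit_iff_coeff_isUnit_isNilpotent.mp hu
  let φ := Ideal.Quotient.mk (nilradical R)
  apply isUnit_of_mk_nilradical_isUnit
  rw [_root_.resultant]
  show IsUnit (φ (_root_.sylvester u f).det)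
  rw [RingHom.map_det, RingHom.mapMatrix_apply]
  set A := (_root_.sylvester u f).map φ with hA
  have htri : A.BlockTriangular OrderDual.toDual := by
    intro i j hij
    have hij' : (i : ℕ) < (j : ℕ) := hij
    simp only [hA, Matrix.map_apply, _root_.sylvester]
    by_cases hi : (i : ℕ) < f.natDegree
    · rw [if_pos hi, if_pos hij'.le]
      have : φ (u.coeff ((j : ℕ) - (i : ℕ))) = 0 := by
        rw [Ideal.Quotient.eq_zero_iff_mem, mem_nilradical]
        exact hunil _ (Nat.sub_ne_zero_of_lt hij')
      exact this
    · rw [if_neg hi]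
      push_neg at hi
      have hle : (i : ℕ) - f.natDegree ≤ (j : ℕ) :=
        le_trans (Nat.sub_le _ _) hij'.le
      rw [if_pos hle]
      have hgt : f.natDegree < (j : ℕ) - ((i : ℕ) - f.natDegree) := by
        omega
      rw [Polynomial.coeff_eq_zero_of_natDegree_lt hgt, map_zero]
  rw [Matrix.det_of_lowerTriangular A htri]
  refine Finset.prod_induction _ IsUnit (fun a b ha hb => ha.mul hb) isUnit_one ?_
  intro i _
  simp only [hA, Matrix.map_apply, _root_.sylvester]
  by_cases hi : (i : ℕ) < f.natDegree
  · rw [if_pos hi, if_pos le_rfl, Nat.sub_self]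
    exact hu0.map φ
  · rw [if_neg hi]
    push_neg at hi
    rw [if_pos (Nat.sub_le _ _), Nat.sub_sub_self hi]
    exact hlc.map φ
end
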